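/- For every m ≥ 1, the 2m×2m matrix N_{2m} over ℚ, obtained from the incidence matrix of S_{2m} = {y₁,…,y_{2m}} by deleting the columns corresponding to the symbols x₁, x₂, x₃, α_{2m}, is invertible; consequently S_{2m} is a good set with boundary {x₁, x₂, x₃, α_{2m}}. -/

import Mathlib

open scoped BigOperators

/-- Symbols: x₁,x₂,x₃,x₄ are 0,1,2,3 and αⱼ = j+3 (so all symbols are distinct naturals). -/
def α (j : ℕ) : ℕ := j + 3

/-- The points y₁, y₂, y₃, … of the paper's construction. -/
def y : ℕ → Fin 4 → ℕ := fun k =>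
  if k = 1 then ![0, 1, 2, 3]
  else if k = 2 then ![0, 1, α 1, α 2]
  else match k % 4 with
    | 1 => ![0, α (k - 1), α k, α (k + 1)]
    | 2 => ![α (k - 3), 1, α (k - 1), α k]
    | 3 => ![α k, α (k + 1), 2, α (k - 1)]
    | _ => ![α (k - 1), α k, α (k - 3), 3]

/-- u = (u₁,u₂,u₃,u₄) solves equation (1) for f on S. -/
def Solves (S : Set (Fin 4 → ℕ)) (f : (Fin 4 → ℕ) → ℂ) (u : Fin 4 → ℕ → ℂ) : Prop :=
  ∀ p ∈ S, f p = ∑ i, u i (p i)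

/-- S is good: every complex function on S decomposes into coordinate functions. -/
def IsGood (S : Set (Fin 4 → ℕ)) : Prop := ∀ f, ∃ u, Solves S f u

/-- i-th projection of S. -/
def proj (S : Set (Fin 4 → ℕ)) (i : Fin 4) : Set ℕ := (fun p => p i) '' S

/-- B is a boundary set of S: for every f and every prescription U on B,
equation (1) admits a solution agreeing with U on B, unique on the projections of S. -/
def IsBoundary (S : Set (Fin 4 → ℕ)) (B : Set ℕ) : Prop :=
  B ⊆ ⋃ i, proj S i ∧
  ∀ f : (Fin 4 → ℕ) → ℂ, ∀ U : ℕ → ℂ,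
    (∃ u, Solves S f u ∧ ∀ i, ∀ a ∈ B ∩ proj S i, u i a = U a) ∧
    ∀ u v, Solves S f u → (∀ i, ∀ a ∈ B ∩ proj S i, u i a = U a) →
      Solves S f v → (∀ i, ∀ a ∈ B ∩ proj S i, v i a = U a) →
      ∀ i, ∀ a ∈ proj S i, u i a = v i a

/-- S is full: a maximal good subset of the product of its projections. -/
def IsFull (S : Set (Fin 4 → ℕ)) : Prop :=
  IsGood S ∧ ∀ T : Set (Fin 4 → ℕ), S ⊆ T → (∀ p ∈ T, ∀ i, p i ∈ proj S i) →
    IsGood T → T = S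

/-- Sₙ = {y₁,…,y_N}. -/
def Sn (N : ℕ) : Set (Fin 4 → ℕ) := y '' Set.Icc 1 N

/-- The infinite set S = {y₁, y₂, …}. -/
def Sinf : Set (Fin 4 → ℕ) := y '' Set.Ici 1

/-- The extra point z = zₙ = (α_{4n−1}, x₂, α_{4n−3}, x₄). -/
def z (n : ℕ) : Fin 4 → ℕ := ![α (4 * n - 1), 1, α (4 * n - 3), 3]

/-- Two points of S are related iff some finite full subset of S contains both. -/
def Related (S : Set (Fin 4 → ℕ)) (p q : Fin 4 → ℕ) : Prop :=
  ∃ K, K ⊆ S ∧ K.Finite ∧ IsFull K ∧ p ∈ K ∧ q ∈ K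

/-- The 4n×4n incidence matrix A_{4n}: rows y₂,…,y_{4n},zₙ; columns α₁,…,α_{4n}. -/
def A (n : ℕ) : Matrix (Fin (4 * n)) (Fin (4 * n)) ℚ :=
  Matrix.of fun i j =>
    if ∃ k, (if (i : ℕ) = 4 * n - 1 then z n else y ((i : ℕ) + 2)) k = (j : ℕ) + 4
    then 1 else 0

lemma y_one : y 1 = ![0, 1, 2, 3] := by simp [y]
lemma y_two : y 2 = ![0, 1, 4, 5] := by simp [y, α]

lemma y_mod1 (k : ℕ) (hk : 3 ≤ k) (h : k % 4 = 1) : y k = ![0, k+2, k+3, k+4] := by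
  have h1 : k ≠ 1 := by omega
  have h2 : k ≠ 2 := by omega
  have e1 : k - 1 + 3 = k + 2 := by omega
  simp only [y, h1, h2, if_false, h, α, e1]

lemma y_mod2 (k : ℕ) (hk : 3 ≤ k) (h : k % 4 = 2) : y k = ![k, 1, k+2, k+3] := by
  have h1 : k ≠ 1 := by omega
  have h2 : k ≠ 2 := by omega
  have e1 : k - 3 + 3 = k := by omega
  have e2 : k - 1 + 3 = k + 2 := by omega
  simp only [y, h1, h2, if_false, h, α, e1, e2]

lemma y_mod3 (k : ℕ) (hk : 3 ≤ k) (h : k % 4 = 3) : y k = ![k+3, k+4, 2, k+2] := by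
  have h1 : k ≠ 1 := by omega
  have h2 : k ≠ 2 := by omega
  have e2 : k - 1 + 3 = k + 2 := by omega
  simp only [y, h1, h2, if_false, h, α, e2]

lemma y_mod0 (k : ℕ) (hk : 3 ≤ k) (h : k % 4 = 0) : y k = ![k+2, k+3, k, 3] := by
  have h1 : k ≠ 1 := by omega
  have h2 : k ≠ 2 := by omega
  have e1 : k - 3 + 3 = k := by omega
  have e2 : k - 1 + 3 = k + 2 := by omega
  simp only [y, h1, h2, if_false, h, α, e1, e2]

def cc (s : ℕ) : Fin 4 :=
  if s = 0 then 0 else if s = 1 then 1 else if s = 2 then 2 else if s = 3 then 3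
  else match (s - 3) % 4 with
    | 1 => 2 | 2 => 3 | 3 => 0 | _ => 1

lemma cc_big (s : ℕ) (h4 : 4 ≤ s) :
    cc s = (match (s - 3) % 4 with | 1 => 2 | 2 => 3 | 3 => 0 | _ => 1) := by
  have h0 : s ≠ 0 := by omega
  have h1 : s ≠ 1 := by omega
  have h2 : s ≠ 2 := by omega
  have h3 : s ≠ 3 := by omega
  simp only [cc, h0, h1, h2, h3, if_false]

lemma cc0 (s : ℕ) (h4 : 4 ≤ s) (h : (s-3) % 4 = 3) : cc s = 0 := by rw [cc_big s h4, h]; rfl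
lemma cc1 (s : ℕ) (h4 : 4 ≤ s) (h : (s-3) % 4 = 0) : cc s = 1 := by rw [cc_big s h4, h]; rfl
lemma cc2 (s : ℕ) (h4 : 4 ≤ s) (h : (s-3) % 4 = 1) : cc s = 2 := by rw [cc_big s h4, h]; rfl
lemma cc3 (s : ℕ) (h4 : 4 ≤ s) (h : (s-3) % 4 = 2) : cc s = 3 := by rw [cc_big s h4, h]; rfl

lemma kcases (k : ℕ) (hk : 1 ≤ k) :
    k = 1 ∨ k = 2 ∨ (3 ≤ k ∧ (k % 4 = 0 ∨ k % 4 = 1 ∨ k % 4 = 2 ∨ k % 4 = 3)) := by omega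

lemma cc_y (k : ℕ) (hk : 1 ≤ k) (i : Fin 4) : cc (y k i) = i := by
  rcases kcases k hk with rfl | rfl | ⟨h3, h | h | h | h⟩
  · rw [y_one]; fin_cases i <;> decide
  · rw [y_two]; fin_cases i <;> decide
  · rw [y_mod0 k h3 h]; fin_cases i <;> simp
    · exact cc0 _ (by omega) (by omega)
    · exact cc1 _ (by omega) (by omega)
    · exact cc2 _ (by omega) (by omega)
    · decide
  · rw [y_mod1 k h3 h]; fin_cases i <;> simp
    · decide
    · exact cc1 _ (by omega) (by omega)
    · exact cc2 _ (by omega) (by omega)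
    · exact cc3 _ (by omega) (by omega)
  · rw [y_mod2 k h3 h]; fin_cases i <;> simp
    · exact cc0 _ (by omega) (by omega)
    · decide
    · exact cc2 _ (by omega) (by omega)
    · exact cc3 _ (by omega) (by omega)
  · rw [y_mod3 k h3 h]; fin_cases i <;> simp
    · exact cc0 _ (by omega) (by omega)
    · exact cc1 _ (by omega) (by omega)
    · decide
    · exact cc3 _ (by omega) (by omega)

lemma y_inj (k : ℕ) (hk : 1 ≤ k) : Function.Injective (y k) := by
  intro i j h
  have := cc_y k hk i
  rw [h, cc_y k hk j] at this
  exact this.symm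

lemma y_le (m k : ℕ) (hk : 1 ≤ k) (hk2 : k ≤ 2*m) (i : Fin 4) : y k i ≤ 2*m + 3 := by
  rcases kcases k hk with rfl | rfl | ⟨h3, h | h | h | h⟩
  · rw [y_one]; fin_cases i <;> simp <;> omega
  · rw [y_two]; fin_cases i <;> simp <;> omega
  · rw [y_mod0 k h3 h]; fin_cases i <;> simp <;> omega
  · rw [y_mod1 k h3 h]; fin_cases i <;> simp <;> omega
  · rw [y_mod2 k h3 h]; fin_cases i <;> simp <;> omega
  · rw [y_mod3 k h3 h]; fin_cases i <;> simp <;> omega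

lemma sum_y_one (W : ℕ → ℚ) : ∑ i, W (y 1 i) = W 0 + W 1 + W 2 + W 3 := by
  rw [Fin.sum_univ_four, y_one]; simp

lemma sum_y_two (W : ℕ → ℚ) : ∑ i, W (y 2 i) = W 0 + W 1 + W 4 + W 5 := by
  rw [Fin.sum_univ_four, y_two]; simp

lemma sum_y_odd (W : ℕ → ℚ) (k : ℕ) (hk : 3 ≤ k) (hodd : k % 2 = 1)
    (h0 : W 0 = 0) (h2 : W 2 = 0) :
    ∑ i, W (y k i) = W (k+2) + W (k+3) + W (k+4) := by
  have : k % 4 = 1 ∨ k % 4 = 3 := by omega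
  rcases this with h | h
  · rw [Fin.sum_univ_four, y_mod1 k hk h]; simp [h0]; try ring
  · rw [Fin.sum_univ_four, y_mod3 k hk h]; simp [h2]; ring

lemma sum_y_even (W : ℕ → ℚ) (k : ℕ) (hk : 4 ≤ k) (he : k % 2 = 0)
    (h1 : W 1 = 0) (h3 : W 3 = 0) :
    ∑ i, W (y k i) = W k + W (k+2) + W (k+3) := by
  have : k % 4 = 0 ∨ k % 4 = 2 := by omega
  rcases this with h | h
  · rw [Fin.sum_univ_four, y_mod0 k (by omega) h]; simp [h3]; ring
  · rw [Fin.sum_univ_four, y_mod2 k (by omega) h]; simp [h1]; try ring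

lemma rowsum {R : Type*} [AddCommMonoid R] (m k : ℕ) (hk : 1 ≤ k) (W : ℕ → R) :
    (∑ j : Fin (2*m), if ∃ i, y k i = (j:ℕ)+3 then W ((j:ℕ)+3) else 0)
      = ∑ i : Fin 4, if 3 ≤ y k i ∧ y k i ≤ 2*m+2 then W (y k i) else 0 := by
  have hinj := y_inj k hk
  rw [← Finset.sum_filter, ← Finset.sum_filter]
  have hset : (Finset.univ.filter (fun j : Fin (2*m) => ∃ i, y k i = (j:ℕ)+3)).image
        (fun j : Fin (2*m) => (j:ℕ)+3)
      = (Finset.univ.filter (fun i : Fin 4 => 3 ≤ y k i ∧ y k i ≤ 2*m+2)).image (y k) := by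
    ext s
    simp only [Finset.mem_image, Finset.mem_filter, Finset.mem_univ, true_and]
    constructor
    · rintro ⟨j, ⟨i, hi⟩, rfl⟩
      exact ⟨i, ⟨by omega, by have := j.isLt; omega⟩, hi⟩
    · rintro ⟨i, ⟨hs3, hsle⟩, rfl⟩
      refine ⟨⟨y k i - 3, by omega⟩, ⟨i, ?_⟩, ?_⟩ <;> simp <;> omega
  calc (∑ j ∈ Finset.univ.filter (fun j : Fin (2*m) => ∃ i, y k i = (j:ℕ)+3), W ((j:ℕ)+3))
      = ∑ s ∈ (Finset.univ.filter (fun j : Fin (2*m) => ∃ i, y k i = (j:ℕ)+3)).image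
          (fun j : Fin (2*m) => (j:ℕ)+3), W s := by
        rw [Finset.sum_image]
        intro a _ b _ hab
        exact Fin.ext (by beta_reduce at hab; omega)
    _ = ∑ s ∈ (Finset.univ.filter (fun i : Fin 4 => 3 ≤ y k i ∧ y k i ≤ 2*m+2)).image (y k),
          W s := by rw [hset]
    _ = ∑ i ∈ Finset.univ.filter (fun i : Fin 4 => 3 ≤ y k i ∧ y k i ≤ 2*m+2), W (y k i) := by
        rw [Finset.sum_image (fun a _ b _ hab => hinj hab)]

lemma ker_lemma (m : ℕ) (hm : 1 ≤ m) (W : ℕ → ℚ)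
    (h0 : W 0 = 0) (h1 : W 1 = 0) (h2 : W 2 = 0)
    (hhigh : ∀ s, 2*m + 3 ≤ s → W s = 0)
    (H : ∀ k, 1 ≤ k → k ≤ 2*m → ∑ i, W (y k i) = 0) :
    ∀ s, W s = 0 := by
  have e1 : W 3 = 0 := by
    have := H 1 (by omega) (by omega)
    rw [sum_y_one] at this; rw [h0, h1, h2] at this; linarith
  have key : ∀ t, 1 ≤ t → t ≤ m →
      (∀ s, 3 ≤ s → s ≤ 2*t+1 → W s = 0) ∧ W (2*t+2) + W (2*t+3) = 0 := by
    intro t ht1 ht2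
    induction t with
    | zero => omega
    | succ n ih =>
      rcases Nat.eq_or_lt_of_le ht1 with h | h
      · -- t = 1
        have hn : n = 0 := by omega
        subst hn
        refine ⟨fun s hs3 hs => ?_, ?_⟩
        · have : s = 3 := by omega
          rw [this]; exact e1
        · have := H 2 (by omega) (by omega)
          rw [sum_y_two, h0, h1] at this; norm_num at this
          convert this using 2 <;> norm_num
      · -- n ≥ 1
        have hn1 : 1 ≤ n := by omega
        have hn2 : n ≤ m := by omega
        obtain ⟨ihz, ihs⟩ := ih hn1 hn2
        have hodd := H (2*n+1) (by omega) (by omega)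
        rw [sum_y_odd W (2*n+1) (by omega) (by omega) h0 h2] at hodd
        have heven := H (2*n+2) (by omega) (by omega)
        rw [sum_y_even W (2*n+2) (by omega) (by omega) h1 e1] at heven
        have hz2 : W (2*n+2) = 0 := by
          have : W (2*n+1+2) = W (2*n+2) := by
            have := sub_eq_zero.mpr (hodd.trans heven.symm)
            have e : (2*n+1+2) = 2*n+3 := by ring_nf
            linarith [hodd, heven]
          have h23 : W (2*n+3) = W (2*n+2) := by
            have e : 2*n+1+2 = 2*n+3 := by ring
            rw [e] at this; exact this
          linarith [ihs, h23]
        have hz3 : W (2*n+3) = 0 := by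
          have : W (2*n+3) + W (2*n+2) = 0 := by
            have e : 2*n+1+2 = 2*n+3 := by ring
            linarith [ihs]
          linarith
        refine ⟨fun s hs3 hs => ?_, ?_⟩
        · rcases Nat.lt_or_ge s (2*n+2) with hlt | hge
          · exact ihz s hs3 (by omega)
          · have : s = 2*n+2 ∨ s = 2*n+3 := by omega
            rcases this with rfl | rfl
            · exact hz2
            · exact hz3
        · have e4 : 2*n+2+2 = 2*(n+1)+2 := by ring
          have e5 : 2*n+2+3 = 2*(n+1)+3 := by ring
          rw [← e4, ← e5]
          have ek : W (2*n+2) = 0 := hz2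
          linarith [heven]
  obtain ⟨kz, ks⟩ := key m hm (le_refl m)
  intro s
  rcases Nat.lt_or_ge s 3 with h | h
  · interval_cases s <;> assumption
  · rcases Nat.lt_or_ge s (2*m+2) with h' | h'
    · exact kz s h (by omega)
    · rcases Nat.eq_or_lt_of_le h' with h'' | h''
      · have h23 : W (2*m+3) = 0 := hhigh _ (by omega)
        rw [← h'']
        linarith [ks, h23]
      · exact hhigh s (by omega)

lemma y_top (m : ℕ) (hm : 1 ≤ m) : y (2*m) (cc (2*m+3)) = 2*m+3 := by
  rcases Nat.eq_or_lt_of_le hm with h | h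
  · subst h; decide
  · have h4 : 4 ≤ 2*m := by omega
    have : (2*m) % 4 = 0 ∨ (2*m) % 4 = 2 := by omega
    rcases this with hmod | hmod
    · rw [cc1 _ (by omega) (by omega : (2*m+3-3) % 4 = 0), y_mod0 (2*m) (by omega) hmod]
      simp
    · rw [cc3 _ (by omega) (by omega : (2*m+3-3) % 4 = 2), y_mod2 (2*m) (by omega) hmod]
      simp

lemma NQ_isUnit (m : ℕ) (hm : 1 ≤ m) :
    IsUnit (Matrix.of fun i j : Fin (2 * m) =>
      if ∃ k, y ((i : ℕ) + 1) k = (j : ℕ) + 3 then (1 : ℚ) else 0) := by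
  set NQ := (Matrix.of fun i j : Fin (2 * m) =>
      if ∃ k, y ((i : ℕ) + 1) k = (j : ℕ) + 3 then (1 : ℚ) else 0) with hNQ
  rw [← Matrix.mulVec_injective_iff_isUnit]
  have hker : ∀ v, NQ.mulVec v = 0 → v = 0 := by
    intro v hv
    set W : ℕ → ℚ := fun s => if h : 3 ≤ s ∧ s ≤ 2*m+2 then v ⟨s-3, by omega⟩ else 0 with hW
    have hWz : ∀ s, W s = 0 := by
      apply ker_lemma m hm W
      · simp only [hW]; rw [dif_neg (by omega)]
      · simp only [hW]; rw [dif_neg (by omega)]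
      · simp only [hW]; rw [dif_neg (by omega)]
      · intro s hs; simp only [hW]; rw [dif_neg (by omega)]
      · intro k hk1 hk2
        have hrow : NQ.mulVec v ⟨k-1, by omega⟩ = 0 := by rw [hv]; rfl
        have ek : k - 1 + 1 = k := by omega
        calc ∑ i, W (y k i)
            = ∑ i : Fin 4, if 3 ≤ y k i ∧ y k i ≤ 2*m+2 then W (y k i) else 0 := by
              apply Finset.sum_congr rfl; intro i _
              by_cases h : 3 ≤ y k i ∧ y k i ≤ 2*m+2
              · rw [if_pos h]
              · rw [if_neg h]; simp only [hW]; rw [dif_neg h]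
          _ = ∑ j : Fin (2*m), if ∃ i, y k i = (j:ℕ)+3 then W ((j:ℕ)+3) else 0 :=
              (rowsum m k hk1 W).symm
          _ = ∑ j : Fin (2*m), NQ ⟨k-1, by omega⟩ j * v j := by
              apply Finset.sum_congr rfl; intro j _
              simp only [hNQ, Matrix.of_apply, ek]
              by_cases h : ∃ i, y k i = (j:ℕ)+3
              · rw [if_pos h, if_pos h, one_mul]
                simp only [hW]
                rw [dif_pos ⟨by omega, by have := j.isLt; omega⟩]
                exact congrArg v (Fin.ext (by simp))
              · rw [if_neg h, if_neg h, zero_mul]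
          _ = NQ.mulVec v ⟨k-1, by omega⟩ := by
              simp [Matrix.mulVec, dotProduct]
          _ = 0 := hrow
    funext j
    have hj := hWz ((j:ℕ)+3)
    simp only [hW] at hj
    rw [dif_pos ⟨by omega, by have := j.isLt; omega⟩] at hj
    rw [show v ⟨(j:ℕ)+3-3, by have := j.isLt; omega⟩ = v j from congrArg v (Fin.ext (by simp))] at hj
    simpa using hj
  intro a b hab
  have : NQ.mulVec (a - b) = 0 := by
    rw [Matrix.mulVec_sub, hab, sub_self]
  have := hker _ this
  exact sub_eq_zero.mp this


/-- the 2m×2m matrix N_{2m}, obtained from the incidence matrix of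
S_{2m} by deleting the columns of x₁,x₂,x₃,α_{2m} (remaining columns: x₄ = 3 and
α₁,…,α_{2m−1}, i.e. symbol j+3 for column j), is invertible over ℚ;
consequently S_{2m} is good with boundary {x₁,x₂,x₃,α_{2m}}. -/
theorem stmt_5 (m : ℕ) (hm : 1 ≤ m) :
    IsUnit (Matrix.of fun i j : Fin (2 * m) =>
      if ∃ k, y ((i : ℕ) + 1) k = (j : ℕ) + 3 then (1 : ℚ) else 0) ∧
    IsGood (Sn (2 * m)) ∧
    IsBoundary (Sn (2 * m)) {0, 1, 2, α (2 * m)} := by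
  have hQ := NQ_isUnit m hm
  set Nc : Matrix (Fin (2*m)) (Fin (2*m)) ℂ := Matrix.of fun i j : Fin (2*m) =>
      if ∃ k, y ((i:ℕ)+1) k = (j:ℕ)+3 then (1:ℂ) else 0 with hNcdef
  have hNc : IsUnit Nc := by
    have hmap : Nc = (algebraMap ℚ ℂ).mapMatrix (Matrix.of fun i j : Fin (2*m) =>
        if ∃ k, y ((i:ℕ)+1) k = (j:ℕ)+3 then (1:ℚ) else 0) := by
      ext i j
      simp only [hNcdef, RingHom.mapMatrix_apply, Matrix.map_apply, Matrix.of_apply]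
      rw [apply_ite (algebraMap ℚ ℂ)]
      simp
    rw [hmap]
    exact hQ.map _
  have hinjC : Function.Injective Nc.mulVec := Matrix.mulVec_injective_iff_isUnit.mpr hNc
  have hsurjC : ∀ b, ∃ v, Nc.mulVec v = b := fun b => ⟨Nc⁻¹.mulVec b, by
    rw [Matrix.mulVec_mulVec, Matrix.mul_nonsing_inv _ ((Matrix.isUnit_iff_isUnit_det _).mp hNc),
      Matrix.one_mulVec]⟩
  have hS : ∀ k, 1 ≤ k → k ≤ 2*m → y k ∈ Sn (2*m) := fun k h1 h2 => ⟨k, ⟨h1, h2⟩, rfl⟩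
  -- Existence
  have exi : ∀ (f : (Fin 4 → ℕ) → ℂ) (U : ℕ → ℂ), ∃ u : Fin 4 → ℕ → ℂ,
      Solves (Sn (2*m)) f u ∧ ∀ i : Fin 4, ∀ a : ℕ, a ∈ ({0,1,2, α (2*m)} : Set ℕ) →
        u i a = U a := by
    intro f U
    obtain ⟨v, hv⟩ := hsurjC (fun r => f (y ((r:ℕ)+1)) -
      ∑ l : Fin 4, (if 3 ≤ y ((r:ℕ)+1) l ∧ y ((r:ℕ)+1) l ≤ 2*m+2 then 0 else U (y ((r:ℕ)+1) l)))
    set W : ℕ → ℂ := fun s => if h : 3 ≤ s ∧ s ≤ 2*m+2 then v ⟨s-3, by omega⟩ else U s with hW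
    refine ⟨fun _ => W, ?_, ?_⟩
    · rintro p ⟨k, hk, rfl⟩
      obtain ⟨hk1, hk2⟩ := hk
      have ek : k - 1 + 1 = k := by omega
      have hkf : k - 1 < 2*m := by omega
      have hrow : Nc.mulVec v ⟨k-1, hkf⟩ = f (y k) -
          ∑ l : Fin 4, (if 3 ≤ y k l ∧ y k l ≤ 2*m+2 then 0 else U (y k l)) := by
        rw [hv]
        show f (y ((k-1)+1)) - _ = _
        rw [ek]
      have hfirst : (∑ i : Fin 4, if 3 ≤ y k i ∧ y k i ≤ 2*m+2 then W (y k i) else 0)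
          = Nc.mulVec v ⟨k-1, hkf⟩ := by
        rw [← rowsum m k hk1 W]
        have : Nc.mulVec v ⟨k-1, hkf⟩ = ∑ j : Fin (2*m), Nc ⟨k-1, hkf⟩ j * v j := by
          simp [Matrix.mulVec, dotProduct]
        rw [this]
        apply Finset.sum_congr rfl; intro j _
        simp only [hNcdef, Matrix.of_apply, ek]
        by_cases h : ∃ i, y k i = (j:ℕ)+3
        · rw [if_pos h, if_pos h, one_mul]
          simp only [hW]
          rw [dif_pos ⟨by omega, by have := j.isLt; omega⟩]
          exact congrArg v (Fin.ext (by simp))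
        · rw [if_neg h, if_neg h, zero_mul]
      have hsplit : ∑ i : Fin 4, W (y k i)
          = (∑ i : Fin 4, if 3 ≤ y k i ∧ y k i ≤ 2*m+2 then W (y k i) else 0)
            + (∑ l : Fin 4, if 3 ≤ y k l ∧ y k l ≤ 2*m+2 then 0 else U (y k l)) := by
        rw [← Finset.sum_add_distrib]
        apply Finset.sum_congr rfl; intro i _
        by_cases h : 3 ≤ y k i ∧ y k i ≤ 2*m+2
        · rw [if_pos h, if_pos h, add_zero]
        · rw [if_neg h, if_neg h, zero_add]
          simp only [hW]; rw [dif_neg h]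
      show f (y k) = ∑ i : Fin 4, W (y k i)
      rw [hsplit, hfirst, hrow]
      ring
    · intro i a ha
      simp only [Set.mem_insert_iff, Set.mem_singleton_iff] at ha
      show W a = U a
      rcases ha with rfl | rfl | rfl | rfl <;> · simp only [hW]; rw [dif_neg (by first | omega | (simp only [α]; omega))]
  refine ⟨hQ, ?_, ?_, ?_⟩
  · -- IsGood
    intro f
    obtain ⟨u, hu, _⟩ := exi f 0
    exact ⟨u, hu⟩
  · -- B ⊆ ⋃ proj
    intro a ha
    simp only [Set.mem_insert_iff, Set.mem_singleton_iff] at ha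
    rw [Set.mem_iUnion]
    rcases ha with rfl | rfl | rfl | rfl
    · exact ⟨0, y 1, hS 1 (by omega) (by omega), by rw [y_one]; rfl⟩
    · exact ⟨1, y 1, hS 1 (by omega) (by omega), by rw [y_one]; rfl⟩
    · exact ⟨2, y 1, hS 1 (by omega) (by omega), by rw [y_one]; rfl⟩
    · exact ⟨cc (2*m+3), y (2*m), hS (2*m) (by omega) le_rfl, y_top m hm⟩
  · -- boundary property
    intro f U
    constructor
    · obtain ⟨u, hu, hb⟩ := exi f U
      exact ⟨u, hu, fun i a ha => hb i a ha.1⟩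
    · intro u v hu hbu hv hbv
      set W : ℕ → ℂ := fun s => u (cc s) s - v (cc s) s with hW
      have hmemB : ∀ s : ℕ, s = 0 ∨ s = 1 ∨ s = 2 ∨ s = 2*m+3 →
          s ∈ ({0,1,2, α (2*m)} : Set ℕ) := by
        intro s hs
        simp only [Set.mem_insert_iff, Set.mem_singleton_iff, α]
        omega
      have hb0 : W 0 = 0 := by
        have hp : (0:ℕ) ∈ proj (Sn (2*m)) 0 := ⟨y 1, hS 1 (by omega) (by omega), by rw [y_one]; rfl⟩
        have h1 := hbu 0 0 ⟨hmemB 0 (by omega), hp⟩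
        have h2 := hbv 0 0 ⟨hmemB 0 (by omega), hp⟩
        simp only [hW, show cc 0 = 0 from rfl]
        rw [h1, h2, sub_self]
      have hb1 : W 1 = 0 := by
        have hp : (1:ℕ) ∈ proj (Sn (2*m)) 1 := ⟨y 1, hS 1 (by omega) (by omega), by rw [y_one]; rfl⟩
        have h1 := hbu 1 1 ⟨hmemB 1 (by omega), hp⟩
        have h2 := hbv 1 1 ⟨hmemB 1 (by omega), hp⟩
        simp only [hW, show cc 1 = 1 from rfl]
        rw [h1, h2, sub_self]
      have hb2 : W 2 = 0 := by
        have hp : (2:ℕ) ∈ proj (Sn (2*m)) 2 := ⟨y 1, hS 1 (by omega) (by omega), by rw [y_one]; rfl⟩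
        have h1 := hbu 2 2 ⟨hmemB 2 (by omega), hp⟩
        have h2 := hbv 2 2 ⟨hmemB 2 (by omega), hp⟩
        simp only [hW, show cc 2 = 2 from rfl]
        rw [h1, h2, sub_self]
      have hbtop : W (2*m+3) = 0 := by
        have hp : (2*m+3:ℕ) ∈ proj (Sn (2*m)) (cc (2*m+3)) :=
          ⟨y (2*m), hS (2*m) (by omega) le_rfl, y_top m hm⟩
        have h1 := hbu (cc (2*m+3)) (2*m+3) ⟨hmemB (2*m+3) (by omega), hp⟩
        have h2 := hbv (cc (2*m+3)) (2*m+3) ⟨hmemB (2*m+3) (by omega), hp⟩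
        simp only [hW]
        rw [h1, h2, sub_self]
      have hWout : ∀ s : ℕ, s = 0 ∨ s = 1 ∨ s = 2 ∨ s = 2*m+3 → W s = 0 := by
        intro s hs
        rcases hs with rfl | rfl | rfl | rfl <;> assumption
      have heq : ∀ k, 1 ≤ k → k ≤ 2*m → ∑ i : Fin 4, W (y k i) = 0 := by
        intro k h1 h2
        have e1 := hu (y k) (hS k h1 h2)
        have e2 := hv (y k) (hS k h1 h2)
        have : ∑ i : Fin 4, W (y k i)
            = (∑ i : Fin 4, u i (y k i)) - ∑ i : Fin 4, v i (y k i) := by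
          rw [← Finset.sum_sub_distrib]
          apply Finset.sum_congr rfl; intro i _
          simp only [hW, cc_y k h1 i]
        rw [this, ← e1, ← e2, sub_self]
      have hvec : (fun j : Fin (2*m) => W ((j:ℕ)+3)) = 0 := by
        apply hinjC
        rw [Matrix.mulVec_zero]
        funext r
        have hk1 : 1 ≤ (r:ℕ)+1 := by omega
        have hk2 : (r:ℕ)+1 ≤ 2*m := by have := r.isLt; omega
        calc Nc.mulVec (fun j : Fin (2*m) => W ((j:ℕ)+3)) r
            = ∑ j : Fin (2*m), if ∃ i, y ((r:ℕ)+1) i = (j:ℕ)+3 then W ((j:ℕ)+3) else 0 := by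
              simp only [Matrix.mulVec, dotProduct, hNcdef, Matrix.of_apply]
              apply Finset.sum_congr rfl; intro j _
              rw [ite_mul, one_mul, zero_mul]
          _ = ∑ i : Fin 4, if 3 ≤ y ((r:ℕ)+1) i ∧ y ((r:ℕ)+1) i ≤ 2*m+2
                then W (y ((r:ℕ)+1) i) else 0 := rowsum m ((r:ℕ)+1) hk1 W
          _ = ∑ i : Fin 4, W (y ((r:ℕ)+1) i) := by
              apply Finset.sum_congr rfl; intro i _
              by_cases h : 3 ≤ y ((r:ℕ)+1) i ∧ y ((r:ℕ)+1) i ≤ 2*m+2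
              · rw [if_pos h]
              · rw [if_neg h]
                have hle := y_le m ((r:ℕ)+1) hk1 hk2 i
                exact (hWout _ (by omega)).symm
          _ = 0 := heq _ hk1 hk2
      intro i a ha
      obtain ⟨p, hp, rfl⟩ := ha
      obtain ⟨k, ⟨h1, h2⟩, rfl⟩ := hp
      have hcc := cc_y k h1 i
      have hz : W (y k i) = 0 := by
        have hle := y_le m k h1 h2 i
        by_cases h : 3 ≤ y k i ∧ y k i ≤ 2*m+2
        · have := congrFun hvec ⟨y k i - 3, by omega⟩
          simpa [show y k i - 3 + 3 = y k i from by omega] using this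
        · exact hWout _ (by omega)
      simp only [hW, hcc] at hz
      exact sub_eq_zero.mp hz
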